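/- If two RochetNet menus M1 and M2, both indexed by {0,1,...,K}, are ε-reducible, then they are ε-mode-connected; moreover, the continuous path connecting them can be taken piecewise linear with only five linear pieces. -/

import Mathlib

open MeasureTheory Finset

namespace RN

/-- A RochetNet menu: for each of the `K+1` option indices, an allocation in `[0,1]^n`
and a price. -/
abbrev Menu (n K : ℕ) := Fin (K + 1) → (Fin n → ℝ) × ℝ

/-- Inner product of a valuation and an allocation. -/
def dotp {n : ℕ} (v x : Fin n → ℝ) : ℝ := ∑ j, v j * x j

/-- A valid menu: allocations in `[0,1]^n`, nonnegative prices, default option `(0,0)`. -/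
def IsMenu {n K : ℕ} (M : Menu n K) : Prop :=
  (∀ k j, 0 ≤ (M k).1 j ∧ (M k).1 j ≤ 1) ∧ (∀ k, 0 ≤ (M k).2) ∧ M 0 = 0

/-- Utility of option `k` for valuation `v`. -/
def util {n K : ℕ} (M : Menu n K) (v : Fin n → ℝ) (k : Fin (K + 1)) : ℝ :=
  dotp v (M k).1 - (M k).2

/-- Price extracted at valuation `v`: the maximal price among utility-maximizing options. -/
noncomputable def price {n K : ℕ} (M : Menu n K) (v : Fin n → ℝ) : ℝ :=
  sSup {p : ℝ | ∃ k, (∀ k', util M v k' ≤ util M v k) ∧ p = (M k).2}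

/-- Option `k` is the buyer's selected option at `v`: it maximizes utility and, among
utility maximizers, has maximal price. -/
def Selected {n K : ℕ} (M : Menu n K) (v : Fin n → ℝ) (k : Fin (K + 1)) : Prop :=
  (∀ k', util M v k' ≤ util M v k) ∧ (M k).2 = price M v

/-- The set of valuations. -/
def V (n : ℕ) : Set (Fin n → ℝ) :=
  {v | (∀ j, 0 ≤ v j ∧ v j ≤ 1) ∧ ∑ j, v j ≤ 1}

/-- Expected revenue of menu `M` under valuation distribution `F`. -/
noncomputable def Rev {n K : ℕ} (F : Measure (Fin n → ℝ)) (M : Menu n K) : ℝ :=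
  ∫ v, price M v ∂F

/-- Option-wise convex combination `lam • M + (1 - lam) • M'` of two menus. -/
noncomputable def comb {n K : ℕ} (lam : ℝ) (M M' : Menu n K) : Menu n K :=
  fun k => (fun j => lam * (M k).1 j + (1 - lam) * (M' k).1 j,
            lam * (M k).2 + (1 - lam) * (M' k).2)

/-- `M` is `ε`-reducible: some subset `K'` of options containing the default option, of
cardinality at most `√(K+1)`, contains the buyer's selected option with probability
at least `1 - ε`. -/
def Reducible {n K : ℕ} (F : Measure (Fin n → ℝ)) (M : Menu n K) (ε : ℝ) : Prop :=
  ∃ K' : Finset (Fin (K + 1)), 0 ∈ K' ∧ (K'.card : ℝ) ≤ Real.sqrt (K + 1) ∧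
    (F {v | ∃ k ∈ K', Selected M v k}).toReal ≥ 1 - ε

/-- `M₁` and `M₂` are `ε`-mode-connected by a piecewise linear path with `pieces` linear
pieces, all whose menus are valid and have revenue at least `min (Rev M₁) (Rev M₂) - ε`. -/
def PLConnected {n K : ℕ} (F : Measure (Fin n → ℝ)) (M₁ M₂ : Menu n K) (ε : ℝ)
    (pieces : ℕ) : Prop :=
  ∃ P : Fin (pieces + 1) → Menu n K, P 0 = M₁ ∧ P (Fin.last pieces) = M₂ ∧
    (∀ i, IsMenu (P i)) ∧
    ∀ i : Fin pieces, ∀ lam ∈ Set.Icc (0 : ℝ) 1,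
      Rev F (comb lam (P i.castSucc) (P i.succ)) ≥ min (Rev F M₁) (Rev F M₂) - ε

section Aux

variable {n K : ℕ}

/-! ### Basic lemmas about utilities and prices -/

lemma dotp_comb (lam : ℝ) (v x y : Fin n → ℝ) :
    dotp v (fun j => lam * x j + (1 - lam) * y j) = lam * dotp v x + (1 - lam) * dotp v y := by
  simp only [dotp, Finset.mul_sum, ← Finset.sum_add_distrib]
  exact Finset.sum_congr rfl fun j _ => by ring

lemma util_comb (lam : ℝ) (A B : Menu n K) (v : Fin n → ℝ) (k : Fin (K + 1)) :
    util (comb lam A B) v k = lam * util A v k + (1 - lam) * util B v k := by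
  simp only [util, comb, dotp_comb]; ring

/-- The set of utility-maximizing options. -/
noncomputable def maxSet (M : Menu n K) (v : Fin n → ℝ) : Finset (Fin (K + 1)) :=
  @Finset.filter _ (fun k => ∀ k', util M v k' ≤ util M v k) (Classical.decPred _) Finset.univ

lemma mem_maxSet_iff {M : Menu n K} {v : Fin n → ℝ} {k : Fin (K + 1)} :
    k ∈ maxSet M v ↔ ∀ k', util M v k' ≤ util M v k := by
  simp [maxSet]

lemma maxSet_nonempty (M : Menu n K) (v : Fin n → ℝ) : (maxSet M v).Nonempty := by
  obtain ⟨b, -, hb⟩ := Finset.exists_max_image Finset.univ (util M v) ⟨0, Finset.mem_univ 0⟩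
  exact ⟨b, mem_maxSet_iff.2 fun k' => hb k' (Finset.mem_univ k')⟩

lemma priceSet_eq (M : Menu n K) (v : Fin n → ℝ) :
    {p : ℝ | ∃ k, (∀ k', util M v k' ≤ util M v k) ∧ p = (M k).2}
      = ↑((maxSet M v).image fun k => (M k).2) := by
  ext p
  simp only [Set.mem_setOf_eq, Finset.coe_image, Set.mem_image, Finset.mem_coe, mem_maxSet_iff]
  constructor
  · rintro ⟨k, hk, h⟩; exact ⟨k, hk, h.symm⟩
  · rintro ⟨k, hk, h⟩; exact ⟨k, hk, h.symm⟩

lemma price_eq_max' (M : Menu n K) (v : Fin n → ℝ) :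
    price M v = ((maxSet M v).image fun k => (M k).2).max'
      ((maxSet_nonempty M v).image _) := by
  rw [price, priceSet_eq]
  exact Finset.Nonempty.csSup_eq_max' _

lemma le_price {M : Menu n K} {v : Fin n → ℝ} {k : Fin (K + 1)}
    (hk : k ∈ maxSet M v) : (M k).2 ≤ price M v := by
  rw [price_eq_max']
  exact Finset.le_max' _ ((M k).2) (Finset.mem_image_of_mem (fun k => (M k).2) hk)

lemma price_eq_of {M : Menu n K} {v : Fin n → ℝ} {k : Fin (K + 1)}
    (hk : k ∈ maxSet M v) (h : ∀ m ∈ maxSet M v, (M m).2 ≤ (M k).2) :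
    price M v = (M k).2 := by
  refine le_antisymm ?_ (le_price hk)
  rw [price_eq_max']
  apply Finset.max'_le
  intro p hp
  obtain ⟨m, hm, rfl⟩ := Finset.mem_image.1 hp
  exact h m hm

lemma exists_selected (M : Menu n K) (v : Fin n → ℝ) : ∃ k, Selected M v k := by
  have hne := maxSet_nonempty M v
  obtain ⟨k, hk, hmax⟩ := Finset.exists_max_image (maxSet M v) (fun k => (M k).2) hne
  exact ⟨k, mem_maxSet_iff.1 hk, (price_eq_of hk hmax).symm⟩

lemma Selected.mem_maxSet' {M : Menu n K} {v : Fin n → ℝ} {k : Fin (K + 1)}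
    (h : Selected M v k) : k ∈ maxSet M v := mem_maxSet_iff.2 h.1

lemma selected_of_eq {M : Menu n K} {v : Fin n → ℝ} {k m : Fin (K + 1)}
    (he : M m = M k) (h : Selected M v k) : Selected M v m := by
  constructor
  · intro k'
    have : util M v m = util M v k := by rw [util, util, he]
    rw [this]; exact h.1 k'
  · rw [he]; exact h.2

lemma price_nonneg {M : Menu n K} (hM : IsMenu M) (v : Fin n → ℝ) : 0 ≤ price M v := by
  obtain ⟨k, hk⟩ := exists_selected M v
  rw [← hk.2]; exact hM.2.1 k

lemma util_zero {M : Menu n K} (hM : IsMenu M) (v : Fin n → ℝ) : util M v 0 = 0 := by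
  rw [util, hM.2.2]
  simp [dotp]

lemma price_le_one {M : Menu n K} (hM : IsMenu M) {v : Fin n → ℝ} (hv : v ∈ V n) :
    price M v ≤ 1 := by
  obtain ⟨k, hk⟩ := exists_selected M v
  rw [← hk.2]
  have h0 : (0 : ℝ) ≤ util M v k := by
    rw [← util_zero hM v]; exact hk.1 0
  have h2 : dotp v (M k).1 ≤ 1 := by
    calc dotp v (M k).1 ≤ ∑ j, v j := by
          apply Finset.sum_le_sum
          intro j _
          calc v j * (M k).1 j ≤ v j * 1 :=
                mul_le_mul_of_nonneg_left (hM.1 k j).2 (hv.1 j).1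
            _ = v j := mul_one _
      _ ≤ 1 := hv.2
  have := hk.1 k  -- trivial
  rw [util] at h0
  linarith

lemma price_le_bound {M : Menu n K} (v : Fin n → ℝ) :
    price M v ≤ Finset.univ.sup' ⟨0, Finset.mem_univ 0⟩ (fun k => (M k).2) := by
  obtain ⟨k, hk⟩ := exists_selected M v
  rw [← hk.2]
  exact Finset.le_sup' (fun k => (M k).2) (Finset.mem_univ k)

/-! ### Measurability -/

lemma measurable_util (M : Menu n K) (k : Fin (K + 1)) :
    Measurable fun v : Fin n → ℝ => util M v k := by
  apply Measurable.sub _ measurable_const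
  exact Finset.measurable_sum _ fun j _ => (measurable_pi_apply j).mul_const _

lemma measurableSet_maxSet (M : Menu n K) (k : Fin (K + 1)) :
    MeasurableSet {v : Fin n → ℝ | ∀ k', util M v k' ≤ util M v k} := by
  have : {v : Fin n → ℝ | ∀ k', util M v k' ≤ util M v k}
      = ⋂ k', {v | util M v k' ≤ util M v k} := by ext v; simp
  rw [this]
  exact MeasurableSet.iInter fun k' =>
    measurableSet_le (measurable_util M k') (measurable_util M k)

lemma measurable_finset_sup' {ι : Type*} {α : Type*} [MeasurableSpace α]
    (s : Finset ι) (hs : s.Nonempty) (f : ι → α → ℝ) (hf : ∀ i, Measurable (f i)) :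
    Measurable fun v => s.sup' hs fun i => f i v := by
  induction hs using Finset.Nonempty.cons_induction with
  | singleton i => simpa using hf i
  | cons a s ha hs ih =>
      have : (fun v => (Finset.cons a s ha).sup' (Finset.cons_nonempty ha) fun i => f i v)
          = fun v => max (f a v) (s.sup' hs fun i => f i v) := by
        funext v; rw [Finset.sup'_cons]
      rw [this]
      exact (hf a).max ih

lemma price_eq_sup' {M : Menu n K} (hM : IsMenu M) (v : Fin n → ℝ) :
    price M v = Finset.univ.sup' ⟨0, Finset.mem_univ 0⟩
      (fun k => if (∀ k', util M v k' ≤ util M v k) then (M k).2 else 0) := by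
  classical
  apply le_antisymm
  · obtain ⟨k, hk⟩ := exists_selected M v
    rw [← hk.2]
    have : (M k).2 = if (∀ k', util M v k' ≤ util M v k) then (M k).2 else 0 := by
      rw [if_pos hk.1]
    rw [this]
    exact Finset.le_sup' (fun k => if (∀ k', util M v k' ≤ util M v k) then (M k).2 else 0)
      (Finset.mem_univ k)
  · apply Finset.sup'_le
    intro k _
    by_cases h : ∀ k', util M v k' ≤ util M v k
    · rw [if_pos h]; exact le_price (mem_maxSet_iff.2 h)
    · rw [if_neg h]; exact price_nonneg hM v

lemma measurable_price {M : Menu n K} (hM : IsMenu M) : Measurable (price M) := by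
  classical
  have : price M = fun v => Finset.univ.sup' ⟨0, Finset.mem_univ 0⟩
      (fun k => if (∀ k', util M v k' ≤ util M v k) then (M k).2 else 0) := by
    funext v; exact price_eq_sup' hM v
  rw [this]
  apply measurable_finset_sup'
  intro k
  exact Measurable.ite (measurableSet_maxSet M k) measurable_const measurable_const

lemma measurableSet_V (n : ℕ) : MeasurableSet (V n) := by
  have : V n = (⋂ j, {v : Fin n → ℝ | 0 ≤ v j ∧ v j ≤ 1}) ∩ {v | ∑ j, v j ≤ 1} := by
    ext v; simp [V, forall_and]
  rw [this]
  apply MeasurableSet.inter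
  · exact MeasurableSet.iInter fun j =>
      (measurableSet_le measurable_const (measurable_pi_apply j)).inter
        (measurableSet_le (measurable_pi_apply j) measurable_const)
  · exact measurableSet_le (Finset.measurable_sum _ fun j _ => measurable_pi_apply j)
      measurable_const

lemma measurableSet_selSet {M : Menu n K} (hM : IsMenu M) (K' : Finset (Fin (K + 1))) :
    MeasurableSet {v : Fin n → ℝ | ∃ k ∈ K', Selected M v k} := by
  have : {v : Fin n → ℝ | ∃ k ∈ K', Selected M v k}
      = ⋃ k ∈ K', ({v | ∀ k', util M v k' ≤ util M v k} ∩ {v | price M v = (M k).2}) := by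
    ext v
    simp only [Set.mem_setOf_eq, Set.mem_iUnion, Set.mem_inter_iff]
    constructor
    · rintro ⟨k, hk, h1, h2⟩; exact ⟨k, hk, h1, h2.symm⟩
    · rintro ⟨k, hk, h1, h2⟩; exact ⟨k, hk, h1, h2.symm⟩
  rw [this]
  exact MeasurableSet.biUnion K'.countable_toSet fun k _ =>
    (measurableSet_maxSet M k).inter ((measurable_price hM) (measurableSet_singleton _))

lemma integrable_price {M : Menu n K} (hM : IsMenu M) (F : Measure (Fin n → ℝ))
    [IsFiniteMeasure F] : Integrable (price M) F := by
  set B := Finset.univ.sup' ⟨0, Finset.mem_univ (0 : Fin (K + 1))⟩ (fun k => (M k).2) with hB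
  apply Integrable.mono' (integrable_const B) (measurable_price hM).aestronglyMeasurable
  apply Filter.Eventually.of_forall
  intro v
  rw [Real.norm_eq_abs, abs_of_nonneg (price_nonneg hM v)]
  exact price_le_bound v

/-! ### Convex combinations -/

lemma isMenu_comb {lam : ℝ} (hlam : lam ∈ Set.Icc (0 : ℝ) 1) {A B : Menu n K}
    (hA : IsMenu A) (hB : IsMenu B) : IsMenu (comb lam A B) := by
  obtain ⟨hl0, hl1⟩ := hlam
  refine ⟨fun k j => ⟨?_, ?_⟩, fun k => ?_, ?_⟩
  · show (0:ℝ) ≤ lam * (A k).1 j + (1 - lam) * (B k).1 j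
    have h1 := (hA.1 k j).1
    have h2 := (hB.1 k j).1
    have := mul_nonneg hl0 h1
    have := mul_nonneg (by linarith : (0:ℝ) ≤ 1 - lam) h2
    linarith
  · show lam * (A k).1 j + (1 - lam) * (B k).1 j ≤ 1
    have h1 := (hA.1 k j).2
    have h2 := (hB.1 k j).2
    have := mul_le_mul_of_nonneg_left h1 hl0
    have := mul_le_mul_of_nonneg_left h2 (by linarith : (0:ℝ) ≤ 1 - lam)
    linarith
  · show (0:ℝ) ≤ lam * (A k).2 + (1 - lam) * (B k).2
    have := mul_nonneg hl0 (hA.2.1 k)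
    have := mul_nonneg (by linarith : (0:ℝ) ≤ 1 - lam) (hB.2.1 k)
    linarith
  · simp only [comb, hA.2.2, hB.2.2]
    apply Prod.ext <;> simp [Prod.fst_zero, Prod.snd_zero]
    · funext j; simp

lemma comb_self (lam : ℝ) (M : Menu n K) : comb lam M M = M := by
  funext k
  apply Prod.ext
  · funext j; simp only [comb]; ring
  · simp only [comb]; ring

lemma price_comb_ge {lam : ℝ} (hlam : lam ∈ Set.Icc (0 : ℝ) 1) {A B : Menu n K}
    {v : Fin n → ℝ} {m : Fin (K + 1)} (hA : Selected A v m) (hB : Selected B v m) :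
    lam * price A v + (1 - lam) * price B v ≤ price (comb lam A B) v := by
  obtain ⟨hl0, hl1⟩ := hlam
  have hmax : m ∈ maxSet (comb lam A B) v := by
    rw [mem_maxSet_iff]
    intro k'
    rw [util_comb, util_comb]
    have h1 : lam * util A v k' ≤ lam * util A v m :=
      mul_le_mul_of_nonneg_left (hA.1 k') hl0
    have h2 : (1 - lam) * util B v k' ≤ (1 - lam) * util B v m :=
      mul_le_mul_of_nonneg_left (hB.1 k') (by linarith)
    linarith
  have := le_price hmax
  have hcomb : ((comb lam A B) m).2 = lam * price A v + (1 - lam) * price B v := by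
    simp only [comb, hA.2, hB.2]
  linarith [hcomb ▸ this]

/-- Expanding a menu along a reindexing map: selection and price are preserved. -/
lemma selected_expand {M : Menu n K} {v : Fin n → ℝ} {k : Fin (K + 1)}
    (σ : Fin (K + 1) → Fin (K + 1)) (hσ : σ k = k) (hsel : Selected M v k) :
    Selected (fun m => M (σ m)) v k ∧ price (fun m => M (σ m)) v = price M v := by
  set E : Menu n K := fun m => M (σ m) with hE
  have hutil : ∀ m, util E v m = util M v (σ m) := fun m => rfl
  have hEk : E k = M k := by rw [hE]; simp [hσ]
  have hmaxE : ∀ m, util E v m ≤ util E v k := by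
    intro m
    rw [hutil, hutil, hσ]
    exact hsel.1 (σ m)
  have hkE : k ∈ maxSet E v := mem_maxSet_iff.2 hmaxE
  have hprice : price E v = (M k).2 := by
    have h2 : ∀ m ∈ maxSet E v, (E m).2 ≤ (E k).2 := by
      intro m hm
      have hmM : σ m ∈ maxSet M v := by
        rw [mem_maxSet_iff]
        intro k'
        have := hmaxE k  -- trivial
        have h3 : util M v (σ m) = util E v m := (hutil m).symm
        have h4 : util E v m ≥ util E v k := le_of_eq rfl |>.trans (mem_maxSet_iff.1 hm k)
        calc util M v k' ≤ util M v k := hsel.1 k'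
          _ = util E v k := by rw [hutil, hσ]
          _ ≤ util E v m := mem_maxSet_iff.1 hm k
          _ = util M v (σ m) := hutil m
      calc (E m).2 = (M (σ m)).2 := rfl
        _ ≤ price M v := le_price hmM
        _ = (M k).2 := hsel.2.symm
        _ = (E k).2 := by rw [hEk]
    have := price_eq_of hkE h2
    rw [this, hEk]
  refine ⟨⟨hmaxE, ?_⟩, hprice.trans hsel.2⟩
  rw [hEk, hprice]

end Aux

section Integrals

variable {n K : ℕ}

lemma seg_bound (F : Measure (Fin n → ℝ)) [IsProbabilityMeasure F]
    {A B : Menu n K} (hA : IsMenu A) (hB : IsMenu B) {S : Set (Fin n → ℝ)}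
    (hSm : MeasurableSet S)
    (hsel : ∀ v ∈ S ∩ V n, ∃ m, Selected A v m ∧ Selected B v m)
    {lam : ℝ} (hlam : lam ∈ Set.Icc (0 : ℝ) 1) :
    lam * ∫ v in S ∩ V n, price A v ∂F + (1 - lam) * ∫ v in S ∩ V n, price B v ∂F
      ≤ Rev F (comb lam A B) := by
  have hVm : MeasurableSet (V n) := measurableSet_V n
  set T := S ∩ V n with hTdef
  have hT : MeasurableSet T := hSm.inter hVm
  set C := comb lam A B with hCdef
  have hC : IsMenu C := isMenu_comb hlam hA hB
  have hIC : Integrable (price C) F := integrable_price hC F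
  have hIA : Integrable (price A) F := integrable_price hA F
  have hIB : Integrable (price B) F := integrable_price hB F
  have key : ∀ v ∈ T, lam * price A v + (1 - lam) * price B v ≤ price C v := by
    intro v hv
    obtain ⟨m, hmA, hmB⟩ := hsel v hv
    exact price_comb_ge hlam hmA hmB
  have h1 : ∫ v in T, (lam * price A v + (1 - lam) * price B v) ∂F
      ≤ ∫ v in T, price C v ∂F := by
    apply setIntegral_mono_on _ hIC.integrableOn hT key
    exact ((hIA.const_mul lam).add (hIB.const_mul (1 - lam))).integrableOn
  have h2 : ∫ v in T, (lam * price A v + (1 - lam) * price B v) ∂F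
      = lam * ∫ v in T, price A v ∂F + (1 - lam) * ∫ v in T, price B v ∂F := by
    rw [integral_add (hIA.integrableOn.const_mul lam) (hIB.integrableOn.const_mul (1 - lam)),
      integral_const_mul, integral_const_mul]
  have h3 : (0 : ℝ) ≤ ∫ v in Tᶜ, price C v ∂F :=
    setIntegral_nonneg hT.compl fun v _ => price_nonneg hC v
  have h4 : ∫ v in T, price C v ∂F + ∫ v in Tᶜ, price C v ∂F = ∫ v, price C v ∂F :=
    integral_add_compl hT hIC
  have : Rev F C = ∫ v, price C v ∂F := rfl
  linarith

lemma tail_bound (F : Measure (Fin n → ℝ)) [IsProbabilityMeasure F]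
    (hFV : F (V n) = 1) {M : Menu n K} (hM : IsMenu M) {S : Set (Fin n → ℝ)}
    (hSm : MeasurableSet S) {ε : ℝ} (hS : (F S).toReal ≥ 1 - ε) :
    Rev F M - ε ≤ ∫ v in S ∩ V n, price M v ∂F := by
  have hVm : MeasurableSet (V n) := measurableSet_V n
  set T := S ∩ V n with hTdef
  have hT : MeasurableSet T := hSm.inter hVm
  have hIM : Integrable (price M) F := integrable_price hM F
  have h4 : ∫ v in T, price M v ∂F + ∫ v in Tᶜ, price M v ∂F = ∫ v, price M v ∂F :=
    integral_add_compl hT hIM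
  have haeV : ∀ᵐ v ∂F, v ∈ V n := by
    rw [ae_iff]
    have : {v : Fin n → ℝ | ¬ v ∈ V n} = (V n)ᶜ := rfl
    rw [this, measure_compl hVm (measure_ne_top F _), hFV, measure_univ, tsub_self]
  have hle1 : ∀ᵐ v ∂F, price M v ≤ 1 := haeV.mono fun v hv => price_le_one hM hv
  have h5 : ∫ v in Tᶜ, price M v ∂F ≤ ∫ v in Tᶜ, (1 : ℝ) ∂F := by
    apply integral_mono_ae hIM.integrableOn (integrable_const 1)
    exact ae_restrict_of_ae hle1
  have h6 : ∫ v in Tᶜ, (1 : ℝ) ∂F = (F Tᶜ).toReal := by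
    rw [setIntegral_const, smul_eq_mul, mul_one]; rfl
  have h7 : (F Tᶜ).toReal ≤ ε := by
    have hsub : Tᶜ ⊆ Sᶜ ∪ (V n)ᶜ := by
      rw [hTdef, Set.compl_inter]
    have hm1 : F Tᶜ ≤ F Sᶜ + F (V n)ᶜ := le_trans (measure_mono hsub) (measure_union_le _ _)
    have hVc : F (V n)ᶜ = 0 := by
      rw [measure_compl hVm (measure_ne_top F _), hFV, measure_univ, tsub_self]
    rw [hVc, add_zero] at hm1
    have hSc : (F Sᶜ).toReal = 1 - (F S).toReal := by
      rw [measure_compl hSm (measure_ne_top F _), measure_univ,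
        ENNReal.toReal_sub_of_le prob_le_one ENNReal.one_ne_top, ENNReal.toReal_one]
    calc (F Tᶜ).toReal ≤ (F Sᶜ).toReal :=
          ENNReal.toReal_mono (measure_ne_top F _) hm1
      _ = 1 - (F S).toReal := hSc
      _ ≤ ε := by linarith
  have : Rev F M = ∫ v, price M v ∂F := rfl
  linarith

end Integrals

section Combinatorics

lemma exists_g {N : ℕ} (K'₁ K'₂ : Finset (Fin (N + 1))) (h01 : 0 ∈ K'₁) (h02 : 0 ∈ K'₂)
    (hcard : K'₁.card * K'₂.card ≤ N + 1) :
    ∃ g : Fin (N + 1) → Fin (N + 1) × Fin (N + 1),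
      (∀ m, (g m).1 ∈ K'₁ ∧ (g m).2 ∈ K'₂) ∧
      (∀ k ∈ K'₁, (g k).1 = k) ∧ (∀ l ∈ K'₂, (g l).2 = l) ∧
      (∀ k ∈ K'₁, ∀ l ∈ K'₂, ∃ m, g m = (k, l)) := by
  classical
  set C : Finset (Fin (N + 1) × Fin (N + 1)) :=
    (((K'₁ ∩ K'₂).image fun m => (m, m)) ∪ ((K'₁ \ K'₂).image fun k => (k, (0 : Fin (N + 1)))))
      ∪ ((K'₂ \ K'₁).image fun l => ((0 : Fin (N + 1)), l)) with hC
  set P := (K'₁ ×ˢ K'₂) \ C with hP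
  set Free := (Finset.univ : Finset (Fin (N + 1))) \ (K'₁ ∪ K'₂) with hFree
  have hCsub : C ⊆ K'₁ ×ˢ K'₂ := by
    intro p hp
    rw [hC, Finset.mem_union, Finset.mem_union] at hp
    rcases hp with (hp | hp) | hp
    · obtain ⟨m, hm, rfl⟩ := Finset.mem_image.1 hp
      rw [Finset.mem_inter] at hm
      exact Finset.mem_product.2 ⟨hm.1, hm.2⟩
    · obtain ⟨k, hk, rfl⟩ := Finset.mem_image.1 hp
      rw [Finset.mem_sdiff] at hk
      exact Finset.mem_product.2 ⟨hk.1, h02⟩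
    · obtain ⟨l, hl, rfl⟩ := Finset.mem_image.1 hp
      rw [Finset.mem_sdiff] at hl
      exact Finset.mem_product.2 ⟨h01, hl.1⟩
  have hinj1 : Function.Injective (fun m : Fin (N + 1) => (m, m)) := by
    intro a b h; exact (Prod.mk.injEq _ _ _ _ ▸ h).1
  have hinj2 : Function.Injective (fun k : Fin (N + 1) => (k, (0 : Fin (N + 1)))) := by
    intro a b h; exact (Prod.mk.injEq _ _ _ _ ▸ h).1
  have hinj3 : Function.Injective (fun l : Fin (N + 1) => ((0 : Fin (N + 1)), l)) := by
    intro a b h; exact (Prod.mk.injEq _ _ _ _ ▸ h).2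
  have hd1 : Disjoint ((K'₁ ∩ K'₂).image fun m => (m, m))
      ((K'₁ \ K'₂).image fun k => (k, (0 : Fin (N + 1)))) := by
    rw [Finset.disjoint_left]
    intro p hp1 hp2
    obtain ⟨m, hm, rfl⟩ := Finset.mem_image.1 hp1
    obtain ⟨k, hk, hke⟩ := Finset.mem_image.1 hp2
    rw [Finset.mem_inter] at hm
    rw [Finset.mem_sdiff] at hk
    have h1 : k = m := congrArg Prod.fst hke
    have h2 : (0 : Fin (N + 1)) = m := congrArg Prod.snd hke
    exact hk.2 (h1.trans h2.symm ▸ h02)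
  have hd2 : Disjoint
      ((((K'₁ ∩ K'₂).image fun m => (m, m)) ∪ ((K'₁ \ K'₂).image fun k => (k, (0 : Fin (N + 1))))))
      ((K'₂ \ K'₁).image fun l => ((0 : Fin (N + 1)), l)) := by
    rw [Finset.disjoint_left]
    intro p hp1 hp2
    obtain ⟨l, hl, rfl⟩ := Finset.mem_image.1 hp2
    rw [Finset.mem_sdiff] at hl
    rw [Finset.mem_union] at hp1
    rcases hp1 with hp1 | hp1
    · obtain ⟨m, hm, hme⟩ := Finset.mem_image.1 hp1
      rw [Finset.mem_inter] at hm
      have h1 : m = (0 : Fin (N + 1)) := congrArg Prod.fst hme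
      have h2 : m = l := congrArg Prod.snd hme
      exact hl.2 (h2 ▸ h1 ▸ hm.1)
    · obtain ⟨k, hk, hke⟩ := Finset.mem_image.1 hp1
      have h2 : (0 : Fin (N + 1)) = l := congrArg Prod.snd hke
      exact hl.2 (h2 ▸ h01)
  have hCcard : C.card = (K'₁ ∪ K'₂).card := by
    rw [hC, Finset.card_union_of_disjoint hd2, Finset.card_union_of_disjoint hd1,
      Finset.card_image_of_injective _ hinj1, Finset.card_image_of_injective _ hinj2,
      Finset.card_image_of_injective _ hinj3]
    have e1 : (K'₁ ∩ K'₂).card + (K'₁ \ K'₂).card = K'₁.card := by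
      rw [add_comm]; exact Finset.card_sdiff_add_card_inter K'₁ K'₂
    have e2 : (K'₂ \ K'₁).card + K'₁.card = (K'₁ ∪ K'₂).card := by
      rw [Finset.card_sdiff_add_card, Finset.union_comm]
    omega
  have hPcard : P.card + C.card = (K'₁ ×ˢ K'₂).card :=
    Finset.card_sdiff_add_card_eq_card hCsub
  have hFreecard : Free.card + (K'₁ ∪ K'₂).card = N + 1 := by
    rw [hFree, Finset.card_sdiff_of_subset (Finset.subset_univ _)]
    have h := Finset.card_le_card (Finset.subset_univ (K'₁ ∪ K'₂))
    simp only [Finset.card_univ, Fintype.card_fin] at h ⊢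
    omega
  have hprod : (K'₁ ×ˢ K'₂).card = K'₁.card * K'₂.card := Finset.card_product _ _
  have hPF : P.card ≤ Free.card := by omega
  have hcard' : Fintype.card {x // x ∈ P} ≤ Fintype.card {y // y ∈ Free} := by
    simpa [Fintype.card_coe] using hPF
  obtain ⟨θ⟩ := Function.Embedding.nonempty_of_card_le hcard'
  refine ⟨fun m =>
    if h1 : m ∈ K'₁ then (if m ∈ K'₂ then (m, m) else (m, 0))
    else if h2 : m ∈ K'₂ then (0, m)
    else if h3 : ∃ p : {x // x ∈ P}, ((θ p : {y // y ∈ Free}) : Fin (N + 1)) = m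
      then ((h3.choose : {x // x ∈ P}) : Fin (N + 1) × Fin (N + 1)) else (0, 0), ?_, ?_, ?_, ?_⟩
  · intro m
    by_cases h1 : m ∈ K'₁
    · by_cases h2 : m ∈ K'₂
      · simp only [dif_pos h1, if_pos h2]; exact ⟨h1, h2⟩
      · simp only [dif_pos h1, if_neg h2]; exact ⟨h1, h02⟩
    · by_cases h2 : m ∈ K'₂
      · simp only [dif_neg h1, dif_pos h2]; exact ⟨h01, h2⟩
      · simp only [dif_neg h1, dif_neg h2]
        by_cases h3 : ∃ p : {x // x ∈ P}, ((θ p : {y // y ∈ Free}) : Fin (N + 1)) = m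
        · simp only [dif_pos h3]
          have hp := (h3.choose : {x // x ∈ P}).2
          have hp2 := Finset.mem_sdiff.1 hp
          exact Finset.mem_product.1 hp2.1
        · simp only [dif_neg h3]; exact ⟨h01, h02⟩
  · intro k hk
    by_cases h2 : k ∈ K'₂
    · simp only [dif_pos hk, if_pos h2]
    · simp only [dif_pos hk, if_neg h2]
  · intro l hl
    by_cases h1 : l ∈ K'₁
    · simp only [dif_pos h1, if_pos hl]
    · simp only [dif_neg h1, dif_pos hl]
  · intro k hk l hl
    by_cases hkl : (k, l) ∈ C
    · rw [hC, Finset.mem_union, Finset.mem_union] at hkl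
      rcases hkl with (hp | hp) | hp
      · obtain ⟨m, hm, hme⟩ := Finset.mem_image.1 hp
        rw [Finset.mem_inter] at hm
        refine ⟨m, ?_⟩
        beta_reduce
        rw [dif_pos hm.1, if_pos hm.2]
        exact hme
      · obtain ⟨k₀, hk₀, hke⟩ := Finset.mem_image.1 hp
        rw [Finset.mem_sdiff] at hk₀
        refine ⟨k₀, ?_⟩
        beta_reduce
        rw [dif_pos hk₀.1, if_neg hk₀.2]
        exact hke
      · obtain ⟨l₀, hl₀, hle⟩ := Finset.mem_image.1 hp
        rw [Finset.mem_sdiff] at hl₀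
        refine ⟨l₀, ?_⟩
        beta_reduce
        rw [dif_neg hl₀.2, dif_pos hl₀.1]
        exact hle
    · have hmemP : (k, l) ∈ P := by
        rw [hP, Finset.mem_sdiff]
        exact ⟨Finset.mem_product.2 ⟨hk, hl⟩, hkl⟩
      set m : Fin (N + 1) := ((θ ⟨(k, l), hmemP⟩ : {y // y ∈ Free}) : Fin (N + 1)) with hm
      have hmF : (m : Fin (N + 1)) ∈ Free := (θ ⟨(k, l), hmemP⟩).2
      have hmF2 := Finset.mem_sdiff.1 hmF
      have hmU := hmF2.2
      rw [Finset.mem_union] at hmU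
      have hm1 : m ∉ K'₁ := fun h => hmU (Or.inl h)
      have hm2 : m ∉ K'₂ := fun h => hmU (Or.inr h)
      have h3 : ∃ p : {x // x ∈ P}, ((θ p : {y // y ∈ Free}) : Fin (N + 1)) = m :=
        ⟨⟨(k, l), hmemP⟩, rfl⟩
      refine ⟨m, ?_⟩
      beta_reduce
      rw [dif_neg hm1, dif_neg hm2, dif_pos h3]
      have hspec := h3.choose_spec
      have heq : h3.choose = ⟨(k, l), hmemP⟩ := by
        apply θ.injective
        apply Subtype.ext
        rw [hspec]
      rw [heq]

end Combinatorics

/-- If two RochetNet menus `M₁`, `M₂` (indexed by `{0,…,K}`) are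
`ε`-reducible, then they are `ε`-mode-connected via a piecewise linear path with five
linear pieces. -/
theorem statement4 {n K : ℕ} (F : Measure (Fin n → ℝ)) [IsProbabilityMeasure F]
    (hFV : F (V n) = 1) (ε : ℝ) (M₁ M₂ : Menu n K) (hM₁ : IsMenu M₁) (hM₂ : IsMenu M₂)
    (hr₁ : Reducible F M₁ ε) (hr₂ : Reducible F M₂ ε) :
    PLConnected F M₁ M₂ ε 5 := by
  classical
  obtain ⟨K'₁, h01, hc1, hS1⟩ := hr₁
  obtain ⟨K'₂, h02, hc2, hS2⟩ := hr₂
  set S₁ := {v : Fin n → ℝ | ∃ k ∈ K'₁, Selected M₁ v k} with hS₁def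
  set S₂ := {v : Fin n → ℝ | ∃ k ∈ K'₂, Selected M₂ v k} with hS₂def
  have hS₁m : MeasurableSet S₁ := measurableSet_selSet hM₁ K'₁
  have hS₂m : MeasurableSet S₂ := measurableSet_selSet hM₂ K'₂
  have hVm : MeasurableSet (V n) := measurableSet_V n
  have hεnn : (0 : ℝ) ≤ ε := by
    have h1 : F S₁ ≤ 1 := prob_le_one
    have h2 : (F S₁).toReal ≤ 1 := by
      have := ENNReal.toReal_mono ENNReal.one_ne_top h1
      simpa using this
    linarith [hS1]
  have hcard : K'₁.card * K'₂.card ≤ K + 1 := by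
    have hs : (0 : ℝ) ≤ Real.sqrt (K + 1) := Real.sqrt_nonneg _
    have hmul : ((K'₁.card : ℝ)) * K'₂.card ≤ Real.sqrt (K + 1) * Real.sqrt (K + 1) :=
      mul_le_mul hc1 hc2 (Nat.cast_nonneg _) hs
    rw [Real.mul_self_sqrt (by positivity)] at hmul
    exact_mod_cast hmul
  obtain ⟨g, hg1, hg2, hg3, hg4⟩ := exists_g K'₁ K'₂ h01 h02 hcard
  set E₁ : Menu n K := fun m => M₁ ((g m).1) with hE₁
  set E₂ : Menu n K := fun m => M₂ ((g m).2) with hE₂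
  have hmE₁ : IsMenu E₁ := by
    refine ⟨fun k j => hM₁.1 _ j, fun k => hM₁.2.1 _, ?_⟩
    show M₁ ((g 0).1) = 0
    rw [hg2 0 h01]; exact hM₁.2.2
  have hmE₂ : IsMenu E₂ := by
    refine ⟨fun k j => hM₂.1 _ j, fun k => hM₂.2.1 _, ?_⟩
    show M₂ ((g 0).2) = 0
    rw [hg3 0 h02]; exact hM₂.2.2
  have hsel1 : ∀ v ∈ S₁ ∩ V n, ∃ m, Selected M₁ v m ∧ Selected E₁ v m := by
    rintro v ⟨hv, -⟩
    obtain ⟨k, hk, hsel⟩ := hv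
    exact ⟨k, hsel, (selected_expand (fun m => (g m).1) (hg2 k hk) hsel).1⟩
  have hpeq1 : ∀ v ∈ S₁ ∩ V n, price E₁ v = price M₁ v := by
    rintro v ⟨hv, -⟩
    obtain ⟨k, hk, hsel⟩ := hv
    exact (selected_expand (fun m => (g m).1) (hg2 k hk) hsel).2
  have hsel2 : ∀ v ∈ S₂ ∩ V n, ∃ m, Selected E₂ v m ∧ Selected M₂ v m := by
    rintro v ⟨hv, -⟩
    obtain ⟨k, hk, hsel⟩ := hv
    exact ⟨k, (selected_expand (fun m => (g m).2) (hg3 k hk) hsel).1, hsel⟩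
  have hpeq2 : ∀ v ∈ S₂ ∩ V n, price E₂ v = price M₂ v := by
    rintro v ⟨hv, -⟩
    obtain ⟨k, hk, hsel⟩ := hv
    exact (selected_expand (fun m => (g m).2) (hg3 k hk) hsel).2
  have hselmid : ∀ v ∈ (Set.univ : Set (Fin n → ℝ)) ∩ V n,
      ∃ m, Selected E₁ v m ∧ Selected E₂ v m := by
    rintro v -
    obtain ⟨k, hk⟩ := exists_selected E₁ v
    obtain ⟨k', hk'⟩ := exists_selected E₂ v
    obtain ⟨m, hm⟩ := hg4 _ (hg1 k).1 _ (hg1 k').2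
    have he1 : E₁ m = E₁ k := by show M₁ ((g m).1) = M₁ ((g k).1); rw [hm]
    have he2 : E₂ m = E₂ k' := by show M₂ ((g m).2) = M₂ ((g k').2); rw [hm]
    exact ⟨m, selected_of_eq he1 hk, selected_of_eq he2 hk'⟩
  -- integral facts
  have tail1 : Rev F M₁ - ε ≤ ∫ v in S₁ ∩ V n, price M₁ v ∂F := tail_bound F hFV hM₁ hS₁m hS1
  have tail2 : Rev F M₂ - ε ≤ ∫ v in S₂ ∩ V n, price M₂ v ∂F := tail_bound F hFV hM₂ hS₂m hS2
  have congr1 : ∫ v in S₁ ∩ V n, price E₁ v ∂F = ∫ v in S₁ ∩ V n, price M₁ v ∂F :=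
    setIntegral_congr_fun (hS₁m.inter hVm) hpeq1
  have congr2 : ∫ v in S₂ ∩ V n, price E₂ v ∂F = ∫ v in S₂ ∩ V n, price M₂ v ∂F :=
    setIntegral_congr_fun (hS₂m.inter hVm) hpeq2
  have tailE1 : Rev F M₁ - ε ≤ ∫ v in (Set.univ : Set (Fin n → ℝ)) ∩ V n, price E₁ v ∂F := by
    have mono : ∫ v in S₁ ∩ V n, price E₁ v ∂F
        ≤ ∫ v in (Set.univ : Set (Fin n → ℝ)) ∩ V n, price E₁ v ∂F := by
      apply setIntegral_mono_set (integrable_price hmE₁ F).integrableOn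
        (Filter.Eventually.of_forall fun v => price_nonneg hmE₁ v)
      apply HasSubset.Subset.eventuallyLE
      rw [Set.univ_inter]
      exact Set.inter_subset_right
    linarith
  have tailE2 : Rev F M₂ - ε ≤ ∫ v in (Set.univ : Set (Fin n → ℝ)) ∩ V n, price E₂ v ∂F := by
    have mono : ∫ v in S₂ ∩ V n, price E₂ v ∂F
        ≤ ∫ v in (Set.univ : Set (Fin n → ℝ)) ∩ V n, price E₂ v ∂F := by
      apply setIntegral_mono_set (integrable_price hmE₂ F).integrableOn
        (Filter.Eventually.of_forall fun v => price_nonneg hmE₂ v)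
      apply HasSubset.Subset.eventuallyLE
      rw [Set.univ_inter]
      exact Set.inter_subset_right
    linarith
  refine ⟨![M₁, E₁, E₂, M₂, M₂, M₂], rfl, rfl, ?_, ?_⟩
  · intro i
    fin_cases i
    · exact hM₁
    · exact hmE₁
    · exact hmE₂
    · exact hM₂
    · exact hM₂
    · exact hM₂
  · intro i lam hlam
    fin_cases i
    · show Rev F (comb lam M₁ E₁) ≥ min (Rev F M₁) (Rev F M₂) - ε
      have hsb := seg_bound F hM₁ hmE₁ hS₁m hsel1 hlam
      rw [congr1] at hsb
      have hr : lam * (∫ v in S₁ ∩ V n, price M₁ v ∂F)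
          + (1 - lam) * (∫ v in S₁ ∩ V n, price M₁ v ∂F)
          = ∫ v in S₁ ∩ V n, price M₁ v ∂F := by ring
      have hmin : min (Rev F M₁) (Rev F M₂) ≤ Rev F M₁ := min_le_left _ _
      linarith
    · show Rev F (comb lam E₁ E₂) ≥ min (Rev F M₁) (Rev F M₂) - ε
      have hsb := seg_bound F hmE₁ hmE₂ MeasurableSet.univ hselmid hlam
      have p1 : lam * (Rev F M₁ - ε)
          ≤ lam * ∫ v in (Set.univ : Set (Fin n → ℝ)) ∩ V n, price E₁ v ∂F :=
        mul_le_mul_of_nonneg_left tailE1 hlam.1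
      have p2 : (1 - lam) * (Rev F M₂ - ε)
          ≤ (1 - lam) * ∫ v in (Set.univ : Set (Fin n → ℝ)) ∩ V n, price E₂ v ∂F :=
        mul_le_mul_of_nonneg_left tailE2 (by linarith [hlam.2])
      have q1 : lam * min (Rev F M₁) (Rev F M₂) ≤ lam * Rev F M₁ :=
        mul_le_mul_of_nonneg_left (min_le_left _ _) hlam.1
      have q2 : (1 - lam) * min (Rev F M₁) (Rev F M₂) ≤ (1 - lam) * Rev F M₂ :=
        mul_le_mul_of_nonneg_left (min_le_right _ _) (by linarith [hlam.2])
      nlinarith [hsb, p1, p2, q1, q2]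
    · show Rev F (comb lam E₂ M₂) ≥ min (Rev F M₁) (Rev F M₂) - ε
      have hsb := seg_bound F hmE₂ hM₂ hS₂m hsel2 hlam
      rw [congr2] at hsb
      have hr : lam * (∫ v in S₂ ∩ V n, price M₂ v ∂F)
          + (1 - lam) * (∫ v in S₂ ∩ V n, price M₂ v ∂F)
          = ∫ v in S₂ ∩ V n, price M₂ v ∂F := by ring
      have hmin : min (Rev F M₁) (Rev F M₂) ≤ Rev F M₂ := min_le_right _ _
      linarith
    · show Rev F (comb lam M₂ M₂) ≥ min (Rev F M₁) (Rev F M₂) - ε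
      rw [comb_self]
      have hmin : min (Rev F M₁) (Rev F M₂) ≤ Rev F M₂ := min_le_right _ _
      linarith
    · show Rev F (comb lam M₂ M₂) ≥ min (Rev F M₁) (Rev F M₂) - ε
      rw [comb_self]
      have hmin : min (Rev F M₁) (Rev F M₂) ≤ Rev F M₂ := min_le_right _ _
      linarith

end RN
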